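/- Define F(t) = V(t) − (1/4)·M(t) + tπχ for t ∈ ℝ, where V'(t) = ∫_Σ det(cosh t·I + sinh t·A(x)) dμ(x), M(t) = ∫_Σ (cosh(2t)·tr A(x) + sinh(2t)·(det A(x) + 1)) dμ(x), and Gauss–Bonnet gives ∫_Σ (det A(x) − 1) dμ(x) = 2πχ. Then F is constant in t. -/

import Mathlib

open MeasureTheory Matrix Real

theorem stmt13 {S : Type*} [MeasurableSpace S] (μ : Measure S) [IsFiniteMeasure μ]
    (A : S → Matrix (Fin 2) (Fin 2) ℝ)
    (hIntTr : Integrable (fun x => (A x).trace) μ)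
    (hIntDet : Integrable (fun x => (A x).det) μ)
    (χ : ℝ)
    (hGB : ∫ x, ((A x).det - 1) ∂μ = 2 * Real.pi * χ)
    (V M F : ℝ → ℝ)
    (hV : ∀ t : ℝ, HasDerivAt V
      (∫ x, (Real.cosh t • (1 : Matrix (Fin 2) (Fin 2) ℝ) + Real.sinh t • A x).det ∂μ) t)
    (hM : ∀ t : ℝ, M t =
      ∫ x, (Real.cosh (2 * t) * (A x).trace + Real.sinh (2 * t) * ((A x).det + 1)) ∂μ)
    (hF : ∀ t : ℝ, F t = V t - M t / 4 + t * Real.pi * χ) :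
    ∀ s t : ℝ, F s = F t := by
  set T : ℝ := ∫ x, (A x).trace ∂μ with hT
  set D : ℝ := ∫ x, (A x).det ∂μ with hD
  set m : ℝ := (μ Set.univ).toReal with hm
  -- Gauss-Bonnet in the form D - m = 2πχ
  have hGB' : D - m = 2 * Real.pi * χ := by
    rw [← hGB, integral_sub hIntDet (integrable_const 1), integral_const]
    simp [hm, hD, Measure.real]
  -- det expansion
  have hdet : ∀ (t : ℝ) (x : S),
      (Real.cosh t • (1 : Matrix (Fin 2) (Fin 2) ℝ) + Real.sinh t • A x).det
        = Real.cosh t ^ 2 + Real.cosh t * Real.sinh t * (A x).trace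
          + Real.sinh t ^ 2 * (A x).det := by
    intro t x
    rw [Matrix.det_fin_two, Matrix.det_fin_two, Matrix.trace_fin_two]
    simp [Matrix.add_apply, Matrix.smul_apply, Matrix.one_apply, smul_eq_mul]
    ring
  -- value of the V derivative integral
  have hVint : ∀ t : ℝ,
      (∫ x, (Real.cosh t • (1 : Matrix (Fin 2) (Fin 2) ℝ) + Real.sinh t • A x).det ∂μ)
        = Real.cosh t ^ 2 * m + Real.cosh t * Real.sinh t * T + Real.sinh t ^ 2 * D := by
    intro t
    have h1 : Integrable (fun x => Real.cosh t * Real.sinh t * (A x).trace) μ :=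
      hIntTr.const_mul _
    have h2 : Integrable (fun x => Real.sinh t ^ 2 * (A x).det) μ :=
      hIntDet.const_mul _
    have h12 : Integrable
        (fun x => Real.cosh t ^ 2 + Real.cosh t * Real.sinh t * (A x).trace) μ :=
      (integrable_const _).add h1
    calc (∫ x, (Real.cosh t • (1 : Matrix (Fin 2) (Fin 2) ℝ) + Real.sinh t • A x).det ∂μ)
        = ∫ x, (Real.cosh t ^ 2 + Real.cosh t * Real.sinh t * (A x).trace
            + Real.sinh t ^ 2 * (A x).det) ∂μ := by
          simp_rw [hdet t]
      _ = _ := by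
          rw [integral_add h12 h2, integral_add (integrable_const _) h1, integral_const,
            integral_const_mul, integral_const_mul]
          simp [hm, hT, hD, smul_eq_mul, Measure.real]
          ring
  -- explicit formula for M
  have hMeq : M = fun t => Real.cosh (2 * t) * T + Real.sinh (2 * t) * (D + m) := by
    funext t
    rw [hM t]
    have h1 : Integrable (fun x => Real.cosh (2 * t) * (A x).trace) μ :=
      hIntTr.const_mul _
    have h2 : Integrable (fun x => Real.sinh (2 * t) * ((A x).det + 1)) μ :=
      (hIntDet.add (integrable_const 1)).const_mul _
    rw [integral_add h1 h2, integral_const_mul, integral_const_mul,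
      integral_add hIntDet (integrable_const 1), integral_const]
    simp [hT, hD, hm, smul_eq_mul, Measure.real]
  -- F has zero derivative everywhere
  have hF' : ∀ t : ℝ, HasDerivAt F 0 t := by
    intro t
    have hFeq : F = fun t => V t - M t / 4 + t * Real.pi * χ := funext hF
    have hVd : HasDerivAt V
        (Real.cosh t ^ 2 * m + Real.cosh t * Real.sinh t * T + Real.sinh t ^ 2 * D) t := by
      have := hV t
      rwa [hVint t] at this
    have h2t : HasDerivAt (fun u : ℝ => 2 * u) 2 t := by
      simpa using (hasDerivAt_id t).const_mul 2
    have hc : HasDerivAt (fun u : ℝ => Real.cosh (2 * u)) (Real.sinh (2 * t) * 2) t :=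
      (Real.hasDerivAt_cosh (2 * t)).comp t h2t
    have hs : HasDerivAt (fun u : ℝ => Real.sinh (2 * u)) (Real.cosh (2 * t) * 2) t :=
      (Real.hasDerivAt_sinh (2 * t)).comp t h2t
    have hMd : HasDerivAt M
        (Real.sinh (2 * t) * 2 * T + Real.cosh (2 * t) * 2 * (D + m)) t := by
      rw [hMeq]
      exact (hc.mul_const T).add (hs.mul_const (D + m))
    have hid : HasDerivAt (fun u : ℝ => u * Real.pi * χ) (Real.pi * χ) t := by
      simpa using ((hasDerivAt_id t).mul_const Real.pi).mul_const χ
    have : HasDerivAt F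
        ((Real.cosh t ^ 2 * m + Real.cosh t * Real.sinh t * T + Real.sinh t ^ 2 * D)
          - (Real.sinh (2 * t) * 2 * T + Real.cosh (2 * t) * 2 * (D + m)) / 4
          + Real.pi * χ) t := by
      rw [hFeq]
      exact ((hVd.sub (hMd.div_const 4)).add hid)
    convert this using 1
    have hcs : Real.cosh t ^ 2 - Real.sinh t ^ 2 = 1 := Real.cosh_sq_sub_sinh_sq t
    have hs2 : Real.sinh (2 * t) = 2 * Real.sinh t * Real.cosh t := Real.sinh_two_mul t
    have hc2 : Real.cosh (2 * t) = Real.cosh t ^ 2 + Real.sinh t ^ 2 := by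
      nlinarith [Real.cosh_two_mul t, hcs]
    have hpi : Real.pi * χ = (D - m) / 2 := by linarith [hGB']
    rw [hs2, hc2, hpi]
    linear_combination ((D - m) / 2) * hcs
  intro s t
  exact is_const_of_deriv_eq_zero (fun x => (hF' x).differentiableAt)
    (fun x => (hF' x).deriv) s t
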